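/- For every a ∈ ℝ and R > 0, the function F(μ) := a·( cos(μR)/(μR²) − sin(μR)/(μ²R³) ) + sin(μR)/R, defined for μ > 0, has infinitely many positive zeros; that is, there exists a strictly increasing sequence μ₁ < μ₂ < μ₃ < ⋯ of positive reals with μ_j → ∞ and F(μ_j) = 0 for all j. -/

import Mathlib

open Real Set Filter

private noncomputable def Ffun (a R : ℝ) : ℝ → ℝ := fun μ =>
  a * (Real.cos (μ * R) / (μ * R ^ 2) - Real.sin (μ * R) / (μ ^ 2 * R ^ 3)) +
    Real.sin (μ * R) / R

private lemma exists_zero (a R : ℝ) (hR : 0 < R) (j : ℕ) :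
    ∃ x ∈ Icc (((2*j+1 : ℕ):ℝ)*π/R) (((2*j+2 : ℕ):ℝ)*π/R), Ffun a R x = 0 := by
  set l : ℝ := ((2*j+1 : ℕ):ℝ)*π/R with hl
  set r : ℝ := ((2*j+2 : ℕ):ℝ)*π/R with hr
  have hRne : R ≠ 0 := hR.ne'
  have hlpos : 0 < l := by positivity
  have hrpos : 0 < r := by positivity
  have hlr : l ≤ r := by
    have h : ((2*j+1:ℕ):ℝ)*π ≤ ((2*j+2:ℕ):ℝ)*π := by
      have : ((2*j+1:ℕ):ℝ) ≤ ((2*j+2:ℕ):ℝ) := by exact_mod_cast Nat.le_succ _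
      exact mul_le_mul_of_nonneg_right this pi_pos.le
    exact (div_le_div_iff_of_pos_right hR).mpr h
  have hlR : l * R = (j:ℝ) * (2*π) + π := by
    rw [hl, div_mul_cancel₀ _ hRne]; push_cast; ring
  have hrR : r * R = ((j+1 : ℕ):ℝ) * (2*π) := by
    rw [hr, div_mul_cancel₀ _ hRne]; push_cast; ring
  have hsl : Real.sin (l * R) = 0 := by
    rw [hlR, show (j:ℝ)*(2*π)+π = ((2*j+1:ℕ):ℝ)*π by push_cast; ring,
      Real.sin_nat_mul_pi]
  have hcl : Real.cos (l * R) = -1 := by rw [hlR]; exact Real.cos_nat_mul_two_pi_add_pi j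
  have hsr : Real.sin (r * R) = 0 := by
    have := Real.sin_nat_mul_pi (2*(j+1)); rw [hrR]; push_cast at this ⊢
    convert this using 2; ring
  have hcr : Real.cos (r * R) = 1 := by rw [hrR]; exact Real.cos_nat_mul_two_pi (j+1)
  have hFl : Ffun a R l = -(a / (l * R ^ 2)) := by
    simp [Ffun, hsl, hcl]; ring
  have hFr : Ffun a R r = a / (r * R ^ 2) := by
    simp [Ffun, hsr, hcr]; ring
  have hcont : ContinuousOn (Ffun a R) (Icc l r) := by
    apply ContinuousOn.add
    · apply ContinuousOn.mul continuousOn_const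
      apply ContinuousOn.sub
      · exact ContinuousOn.div (Real.continuous_cos.comp (continuous_mul_right R)).continuousOn
          (continuousOn_id.mul continuousOn_const)
          (fun x hx => by have : 0 < x := lt_of_lt_of_le hlpos hx.1; positivity)
      · exact ContinuousOn.div (Real.continuous_sin.comp (continuous_mul_right R)).continuousOn
          ((continuousOn_id.pow 2).mul continuousOn_const)
          (fun x hx => by have : 0 < x := lt_of_lt_of_le hlpos hx.1; positivity)
    · exact ((Real.continuous_sin.comp (continuous_mul_right R)).div_const R).continuousOn
  rcases le_or_gt 0 a with ha | ha
  · have h0 : (0:ℝ) ∈ Icc (Ffun a R l) (Ffun a R r) := by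
      constructor
      · rw [hFl]
        simp only [neg_nonpos]
        exact div_nonneg ha (by positivity)
      · rw [hFr]
        exact div_nonneg ha (by positivity)
    obtain ⟨x, hx, hx0⟩ := intermediate_value_Icc hlr hcont h0
    exact ⟨x, hx, hx0⟩
  · have h0 : (0:ℝ) ∈ Icc (Ffun a R r) (Ffun a R l) := by
      constructor
      · rw [hFr]
        exact div_nonpos_of_nonpos_of_nonneg ha.le (by positivity)
      · rw [hFl]
        simp only [neg_nonneg]
        exact div_nonpos_of_nonpos_of_nonneg ha.le (by positivity)
    obtain ⟨x, hx, hx0⟩ := intermediate_value_Icc' hlr hcont h0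
    exact ⟨x, hx, hx0⟩

theorem stmt17 (a R : ℝ) (hR : 0 < R) :
    ∃ μ : ℕ → ℝ, StrictMono μ ∧ (∀ j, 0 < μ j) ∧
      Tendsto μ atTop atTop ∧
      ∀ j, a * (Real.cos (μ j * R) / (μ j * R ^ 2) -
          Real.sin (μ j * R) / ((μ j) ^ 2 * R ^ 3)) +
        Real.sin (μ j * R) / R = 0 := by
  choose μ hmem hzero using exists_zero a R hR
  have hlow : ∀ j, ((2*j+1 : ℕ):ℝ)*π/R ≤ μ j := fun j => (hmem j).1
  have hhigh : ∀ j, μ j ≤ ((2*j+2 : ℕ):ℝ)*π/R := fun j => (hmem j).2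
  have hpos : ∀ j, 0 < μ j := fun j => lt_of_lt_of_le (by positivity) (hlow j)
  refine ⟨μ, ?_, hpos, ?_, fun j => hzero j⟩
  · apply strictMono_nat_of_lt_succ
    intro j
    calc μ j ≤ ((2*j+2 : ℕ):ℝ)*π/R := hhigh j
      _ < ((2*(j+1)+1 : ℕ):ℝ)*π/R := by
          apply div_lt_div_of_pos_right ?_ hR
          have : ((2*j+2 : ℕ):ℝ) < ((2*(j+1)+1 : ℕ):ℝ) := by exact_mod_cast Nat.lt_succ_self _
          exact mul_lt_mul_of_pos_right this pi_pos
      _ ≤ μ (j+1) := hlow (j+1)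
  · apply tendsto_atTop_mono hlow
    apply Tendsto.atTop_div_const hR
    apply Tendsto.atTop_mul_const pi_pos
    apply tendsto_atTop_mono (fun j : ℕ => ?_) tendsto_natCast_atTop_atTop
    push_cast; linarith
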